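/- Any Q-invariant closed subvariety 𝒥 ⊂ ℙ(D¹) which is not contained in ℙ(Hom(X, H/X)) ∪ ℙ(Hom(H/X, V/H)) contains the variety ℐ = ℙ{ζ ⊕ η : η ∘ ζ = 0}. -/

import Mathlib

open Module Submodule


open Module Submodule

private lemma ratio_one_dim {L : Type*} [AddCommGroup L] [Module ℂ L] [FiniteDimensional ℂ L]
    (hL : finrank ℂ L = 1) (x y : L) (hy : y ≠ 0) : ∃ c : ℂ, x = c • y := by
  have hsp : span ℂ {y} = ⊤ := by
    apply Submodule.eq_top_of_finrank_eq
    rw [finrank_span_singleton hy, hL]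
  have hx : x ∈ span ℂ {y} := hsp ▸ Submodule.mem_top
  obtain ⟨c, hc⟩ := Submodule.mem_span_singleton.mp hx
  exact ⟨c, hc.symm⟩

private lemma compl_equiv {U U' : Type*} [AddCommGroup U] [Module ℂ U] [AddCommGroup U']
    [Module ℂ U'] {p q : Submodule ℂ U} {p' q' : Submodule ℂ U'}
    (h : IsCompl p q) (h' : IsCompl p' q') (e₁ : p ≃ₗ[ℂ] p') (e₂ : q ≃ₗ[ℂ] q') :
    ∃ g : U ≃ₗ[ℂ] U', (∀ x : p, g x = e₁ x) ∧ (∀ y : q, g y = e₂ y) ∧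
      (∀ v : U, g v = e₁ ((prodEquivOfIsCompl p q h).symm v).1
        + e₂ ((prodEquivOfIsCompl p q h).symm v).2) := by
  refine ⟨(prodEquivOfIsCompl p q h).symm ≪≫ₗ e₁.prodCongr e₂ ≪≫ₗ
    prodEquivOfIsCompl p' q' h', ?_, ?_, ?_⟩
  · intro x
    simp [prodEquivOfIsCompl_symm_apply_left p q h x, coe_prodEquivOfIsCompl']
  · intro y
    simp [prodEquivOfIsCompl_symm_apply_right p q h y, coe_prodEquivOfIsCompl']
  · intro v
    simp [coe_prodEquivOfIsCompl']

private lemma equiv_sends {U U' : Type*} [AddCommGroup U] [Module ℂ U] [AddCommGroup U']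
    [Module ℂ U'] [FiniteDimensional ℂ U] [FiniteDimensional ℂ U']
    (hr : finrank ℂ U = finrank ℂ U') (u : U) (u' : U')
    (hz : (u = 0 ∧ u' = 0) ∨ (u ≠ 0 ∧ u' ≠ 0)) :
    ∃ g : U ≃ₗ[ℂ] U', g u = u' := by
  rcases hz with ⟨h1, h2⟩ | ⟨h1, h2⟩
  · exact ⟨LinearEquiv.ofFinrankEq U U' hr, by simp [h1, h2]⟩
  · obtain ⟨C, hC⟩ := Submodule.exists_isCompl (span ℂ {u})
    obtain ⟨C', hC'⟩ := Submodule.exists_isCompl (span ℂ {u'})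
    have hq := Submodule.finrank_quotient_add_finrank (span ℂ {u})
    have hq' := Submodule.finrank_quotient_add_finrank (span ℂ {u'})
    have hqe : finrank ℂ C = finrank ℂ (U ⧸ span ℂ {u}) :=
      (LinearEquiv.finrank_eq (quotientEquivOfIsCompl _ _ hC)).symm
    have hqe' : finrank ℂ C' = finrank ℂ (U' ⧸ span ℂ {u'}) :=
      (LinearEquiv.finrank_eq (quotientEquivOfIsCompl _ _ hC')).symm
    have hs1 : finrank ℂ (span ℂ {u}) = 1 := finrank_span_singleton h1
    have hs1' : finrank ℂ (span ℂ {u'}) = 1 := finrank_span_singleton h2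
    have hrc : finrank ℂ C = finrank ℂ C' := by omega
    set e₁ : (span ℂ {u} : Submodule ℂ U) ≃ₗ[ℂ] (span ℂ {u'} : Submodule ℂ U') :=
      (LinearEquiv.toSpanNonzeroSingleton ℂ U u h1).symm.trans
        (LinearEquiv.toSpanNonzeroSingleton ℂ U' u' h2) with he₁
    have he₁u : e₁ ⟨u, Submodule.mem_span_singleton_self u⟩
        = ⟨u', Submodule.mem_span_singleton_self u'⟩ := by
      rw [he₁, LinearEquiv.trans_apply,
        ← LinearEquiv.toSpanNonzeroSingleton_one ℂ U u h1, LinearEquiv.symm_apply_apply]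
      exact LinearEquiv.toSpanNonzeroSingleton_one ℂ U' u' h2
    obtain ⟨g, hg1, _, _⟩ := compl_equiv hC hC' e₁ (LinearEquiv.ofFinrankEq _ _ hrc)
    refine ⟨g, ?_⟩
    have := hg1 ⟨u, Submodule.mem_span_singleton_self u⟩
    rw [this, he₁u]

private lemma isCompl_span_ker {W L : Type*} [AddCommGroup W] [Module ℂ W]
    [AddCommGroup L] [Module ℂ L] [FiniteDimensional ℂ L] (hL : finrank ℂ L = 1)
    (φ : W →ₗ[ℂ] L) (u : W) (hu : φ u ≠ 0) :
    IsCompl (span ℂ {u}) (LinearMap.ker φ) := by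
  constructor
  · rw [disjoint_def]
    intro x hx hker
    obtain ⟨c, hc⟩ := Submodule.mem_span_singleton.mp hx
    rw [LinearMap.mem_ker, ← hc, map_smul] at hker
    rcases smul_eq_zero.mp hker with h | h
    · rw [← hc, h, zero_smul]
    · exact absurd h hu
  · rw [codisjoint_iff, eq_top_iff]
    intro v _
    obtain ⟨c, hc⟩ := ratio_one_dim hL (φ v) (φ u) hu
    refine Submodule.mem_sup.mpr ⟨c • u, Submodule.smul_mem _ c (Submodule.mem_span_singleton_self u),
      v - c • u, ?_, by abel⟩
    rw [LinearMap.mem_ker, map_sub, map_smul, hc, sub_self]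

private lemma pair_trans {W L : Type*} [AddCommGroup W] [Module ℂ W] [FiniteDimensional ℂ W]
    [AddCommGroup L] [Module ℂ L] [FiniteDimensional ℂ L] (hL : finrank ℂ L = 1)
    (φ φ' : W →ₗ[ℂ] L) (u u' w w' : W) (hu : φ u ≠ 0) (huu : φ' u' = φ u)
    (hw : φ w = 0) (hw' : φ' w' = 0) (hzz : (w = 0 ∧ w' = 0) ∨ (w ≠ 0 ∧ w' ≠ 0)) :
    ∃ g : W ≃ₗ[ℂ] W, g u = u' ∧ g w = w' ∧ φ' ∘ₗ (g : W →ₗ[ℂ] W) = φ := by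
  have hu' : φ' u' ≠ 0 := by rw [huu]; exact hu
  have hu0 : u ≠ 0 := fun h => hu (by simp [h])
  have hu0' : u' ≠ 0 := fun h => hu' (by simp [h])
  have hC : IsCompl (span ℂ {u}) (LinearMap.ker φ) := isCompl_span_ker hL φ u hu
  have hC' : IsCompl (span ℂ {u'}) (LinearMap.ker φ') := isCompl_span_ker hL φ' u' hu'
  -- finranks of kernels agree
  have hq := Submodule.finrank_quotient_add_finrank (span ℂ {u})
  have hq' := Submodule.finrank_quotient_add_finrank (span ℂ {u'})
  have hqe : finrank ℂ (LinearMap.ker φ) = finrank ℂ (W ⧸ span ℂ {u}) :=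
    (LinearEquiv.finrank_eq (quotientEquivOfIsCompl _ _ hC)).symm
  have hqe' : finrank ℂ (LinearMap.ker φ') = finrank ℂ (W ⧸ span ℂ {u'}) :=
    (LinearEquiv.finrank_eq (quotientEquivOfIsCompl _ _ hC')).symm
  have hs1 : finrank ℂ (span ℂ {u} : Submodule ℂ W) = 1 := finrank_span_singleton hu0
  have hs1' : finrank ℂ (span ℂ {u'} : Submodule ℂ W) = 1 := finrank_span_singleton hu0'
  have hrk : finrank ℂ (LinearMap.ker φ) = finrank ℂ (LinearMap.ker φ') := by omega
  -- e₂ on kernels, sending w to w'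
  have hzz' : ((⟨w, LinearMap.mem_ker.mpr hw⟩ : LinearMap.ker φ) = 0
        ∧ (⟨w', LinearMap.mem_ker.mpr hw'⟩ : LinearMap.ker φ') = 0)
      ∨ ((⟨w, LinearMap.mem_ker.mpr hw⟩ : LinearMap.ker φ) ≠ 0
        ∧ (⟨w', LinearMap.mem_ker.mpr hw'⟩ : LinearMap.ker φ') ≠ 0) := by
    rcases hzz with ⟨h1, h2⟩ | ⟨h1, h2⟩
    · exact Or.inl ⟨by simp [h1], by simp [h2]⟩
    · exact Or.inr ⟨by simp [Submodule.mk_eq_zero, h1], by simp [Submodule.mk_eq_zero, h2]⟩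
  obtain ⟨e₂, he₂⟩ := equiv_sends hrk _ _ hzz'
  set e₁ : (span ℂ {u} : Submodule ℂ W) ≃ₗ[ℂ] (span ℂ {u'} : Submodule ℂ W) :=
    (LinearEquiv.toSpanNonzeroSingleton ℂ W u hu0).symm.trans
      (LinearEquiv.toSpanNonzeroSingleton ℂ W u' hu0') with he₁
  have he₁u : e₁ ⟨u, Submodule.mem_span_singleton_self u⟩
      = ⟨u', Submodule.mem_span_singleton_self u'⟩ := by
    rw [he₁, LinearEquiv.trans_apply,
      ← LinearEquiv.toSpanNonzeroSingleton_one ℂ W u hu0, LinearEquiv.symm_apply_apply]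
    exact LinearEquiv.toSpanNonzeroSingleton_one ℂ W u' hu0'
  obtain ⟨g, hg1, hg2, hg3⟩ := compl_equiv hC hC' e₁ e₂
  refine ⟨g, ?_, ?_, ?_⟩
  · have := hg1 ⟨u, Submodule.mem_span_singleton_self u⟩
    rw [this, he₁u]
  · have := hg2 ⟨w, LinearMap.mem_ker.mpr hw⟩
    rw [this, he₂]
  · ext v
    rw [LinearMap.comp_apply, LinearEquiv.coe_coe, hg3 v, map_add]
    set p := ((prodEquivOfIsCompl _ _ hC).symm v).1 with hp
    set k := ((prodEquivOfIsCompl _ _ hC).symm v).2 with hk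
    have hv : v = (p : W) + (k : W) := by
      conv_lhs => rw [← (prodEquivOfIsCompl _ _ hC).apply_symm_apply v]
      rw [coe_prodEquivOfIsCompl']
    obtain ⟨c, hc⟩ := Submodule.mem_span_singleton.mp p.2
    have hpe : p = c • (⟨u, Submodule.mem_span_singleton_self u⟩ :
        (span ℂ {u} : Submodule ℂ W)) := by
      apply Subtype.ext; rw [← hc]; rfl
    have hker' : (φ' : W →ₗ[ℂ] L) ((e₂ k : W)) = 0 := (e₂ k).2
    rw [hker', add_zero, hpe, map_smul, he₁u]
    have : φ' ((c • (⟨u', Submodule.mem_span_singleton_self u'⟩ :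
        (span ℂ {u'} : Submodule ℂ W)) : (span ℂ {u'} : Submodule ℂ W)) : W) = c • φ' u' := by
      rw [Submodule.coe_smul, map_smul]
    rw [this, huu]
    have hφk : φ (k : W) = 0 := k.2
    rw [hv, map_add, hφk, add_zero, ← hc, map_smul]


set_option maxHeartbeats 2000000 in
/-- any `Q`-invariant closed cone (i.e. closed subvariety of `ℙ(D¹)`)
`𝒥 ⊂ D¹ = Hom(X, H/X) ⊕ Hom(H/X, V/H)` which is not contained in
`Hom(X, H/X) ∪ Hom(H/X, V/H)` contains `ℐ = {ζ ⊕ η : η ∘ ζ = 0}`.  Here `Q`-invariance is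
invariance under every conjugation by an element of `GL(V)` preserving the flag `X ⊂ H`. -/
theorem stmt10 {V : Type*} [AddCommGroup V] [Module ℂ V] [FiniteDimensional ℂ V]
    (X H : Submodule ℂ V) (hXH : X ≤ H)
    (hX : Module.finrank ℂ X = 1)
    (hH : Module.finrank ℂ H + 1 = Module.finrank ℂ V)
    (hV : 3 ≤ Module.finrank ℂ V)
    (J : Set ((X →ₗ[ℂ] (H ⧸ X.comap H.subtype)) ×
      ((H ⧸ X.comap H.subtype) →ₗ[ℂ] (V ⧸ H))))
    -- `J` is a cone (it is the affine cone over a subset of `ℙ(D¹)`)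
    (hcone : ∀ c : ℂ, ∀ z ∈ J, (c • z.1, c • z.2) ∈ J)
    -- `J` is closed (in any linear coordinate system)
    (hclosed : ∀ (n : ℕ)
      (φ : ((X →ₗ[ℂ] (H ⧸ X.comap H.subtype)) ×
        ((H ⧸ X.comap H.subtype) →ₗ[ℂ] (V ⧸ H))) ≃ₗ[ℂ] (Fin n → ℂ)),
      IsClosed (φ '' J))
    -- `J` is `Q`-invariant
    (hinv : ∀ (e : V ≃ₗ[ℂ] V) (eX : X ≃ₗ[ℂ] X) (eH : H ≃ₗ[ℂ] H)
      (eHX : (H ⧸ X.comap H.subtype) ≃ₗ[ℂ] (H ⧸ X.comap H.subtype))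
      (eVH : (V ⧸ H) ≃ₗ[ℂ] (V ⧸ H)),
      (∀ x : X, (eX x : V) = e (x : V)) →
      (∀ h : H, (eH h : V) = e (h : V)) →
      (∀ h : H, eHX ((X.comap H.subtype).mkQ h) = (X.comap H.subtype).mkQ (eH h)) →
      (∀ v : V, eVH (H.mkQ v) = H.mkQ (e v)) →
      ∀ z ∈ J, (eHX.toLinearMap ∘ₗ z.1 ∘ₗ eX.symm.toLinearMap,
        eVH.toLinearMap ∘ₗ z.2 ∘ₗ eHX.symm.toLinearMap) ∈ J)
    -- `J` is not contained in `ℙ Hom(X,H/X) ∪ ℙ Hom(H/X,V/H)`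
    (hnot : ∃ z ∈ J, z.1 ≠ 0 ∧ z.2 ≠ 0) :
    ∀ z : (X →ₗ[ℂ] (H ⧸ X.comap H.subtype)) × ((H ⧸ X.comap H.subtype) →ₗ[ℂ] (V ⧸ H)),
      z.2 ∘ₗ z.1 = 0 → z ∈ J := by
  -- the orbit lemma: J is invariant under the Levi factor of Q
  have horb : ∀ (a b : ℂ), a ≠ 0 → b ≠ 0 → ∀ g : (H ⧸ (X.comap H.subtype)) ≃ₗ[ℂ] (H ⧸ (X.comap H.subtype)), ∀ z ∈ J,
      (a • (g.toLinearMap ∘ₗ z.1), b • (z.2 ∘ₗ g.symm.toLinearMap)) ∈ J := by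
    intro a b ha hb g z hzJ
    have hc : (a⁻¹ : ℂ) ≠ 0 := inv_ne_zero ha
    obtain ⟨Wc, hWc⟩ := Submodule.exists_isCompl (X.comap H.subtype)
    obtain ⟨Lc, hLc⟩ := Submodule.exists_isCompl H
    set εW : (H ⧸ (X.comap H.subtype)) ≃ₗ[ℂ] Wc := quotientEquivOfIsCompl (X.comap H.subtype) Wc hWc with hεW
    set gW : Wc ≃ₗ[ℂ] Wc := (εW.symm.trans g).trans εW with hgW
    set PH := prodEquivOfIsCompl (X.comap H.subtype) Wc hWc with hPH
    set PV := prodEquivOfIsCompl H Lc hLc with hPV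
    set sA : (X.comap H.subtype) ≃ₗ[ℂ] (X.comap H.subtype) := LinearEquiv.smulOfNeZero ℂ (X.comap H.subtype) a⁻¹ hc with hsA
    set sB : Lc ≃ₗ[ℂ] Lc := LinearEquiv.smulOfNeZero ℂ Lc b hb with hsB
    set eX : X ≃ₗ[ℂ] X := LinearEquiv.smulOfNeZero ℂ X a⁻¹ hc with heX
    set eVH : (V ⧸ H) ≃ₗ[ℂ] (V ⧸ H) := LinearEquiv.smulOfNeZero ℂ (V ⧸ H) b hb with heVH
    set eH : H ≃ₗ[ℂ] H := (PH.symm.trans (sA.prodCongr gW)).trans PH with heH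
    set e : V ≃ₗ[ℂ] V := (PV.symm.trans (eH.prodCongr sB)).trans PV with he
    have heH_left : ∀ x : (X.comap H.subtype), eH (x : H) = ((sA x : (X.comap H.subtype)) : H) := by
      intro x
      rw [heH]
      simp only [LinearEquiv.trans_apply]
      rw [hPH, prodEquivOfIsCompl_symm_apply_left, LinearEquiv.prodCongr_apply]
      simp [coe_prodEquivOfIsCompl']
    have heH_right : ∀ y : Wc, eH (y : H) = ((gW y : Wc) : H) := by
      intro y
      rw [heH]
      simp only [LinearEquiv.trans_apply]
      rw [hPH, prodEquivOfIsCompl_symm_apply_right, LinearEquiv.prodCongr_apply]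
      simp [coe_prodEquivOfIsCompl']
    have he_H : ∀ h : H, e (h : V) = ((eH h : H) : V) := by
      intro h
      rw [he]
      simp only [LinearEquiv.trans_apply]
      rw [hPV, prodEquivOfIsCompl_symm_apply_left, LinearEquiv.prodCongr_apply]
      simp [coe_prodEquivOfIsCompl']
    have he_L : ∀ l : Lc, e (l : V) = ((sB l : Lc) : V) := by
      intro l
      rw [he]
      simp only [LinearEquiv.trans_apply]
      rw [hPV, prodEquivOfIsCompl_symm_apply_right, LinearEquiv.prodCongr_apply]
      simp [coe_prodEquivOfIsCompl']
    have comp1 : ∀ x : X, (eX x : V) = e (x : V) := by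
      intro x
      have hxH : (x : V) ∈ H := hXH x.2
      have hxXmem : (⟨(x : V), hxH⟩ : H) ∈ (X.comap H.subtype) := by
        simp [Submodule.mem_comap]
      have h1 : e (x : V) = ((eH ⟨(x : V), hxH⟩ : H) : V) := he_H ⟨(x : V), hxH⟩
      have h2 : eH ⟨(x : V), hxH⟩ = ((sA ⟨⟨(x : V), hxH⟩, hxXmem⟩ : (X.comap H.subtype)) : H) :=
        heH_left ⟨⟨(x : V), hxH⟩, hxXmem⟩
      rw [h1, h2, hsA, heX]
      simp
    have comp2 : ∀ h : H, (eH h : V) = e (h : V) := by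
      intro h; rw [he_H h]
    have hεk : ∀ y : Wc, (X.comap H.subtype).mkQ (y : H) = εW.symm y := by
      intro y
      rw [hεW, quotientEquivOfIsCompl_symm_apply, Submodule.mkQ_apply]
    have comp3 : ∀ h : H, g ((X.comap H.subtype).mkQ h) = (X.comap H.subtype).mkQ (eH h) := by
      intro h
      have hmk0 : ∀ x : (X.comap H.subtype), (X.comap H.subtype).mkQ (x : H) = 0 :=
        fun x => (Submodule.Quotient.mk_eq_zero (X.comap H.subtype)).mpr x.2
      set p := (PH.symm h).1 with hp
      set k := (PH.symm h).2 with hk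
      have hdec : h = (p : H) + (k : H) := by
        conv_lhs => rw [← PH.apply_symm_apply h]
        rw [hPH, coe_prodEquivOfIsCompl']
      rw [hdec]
      simp only [map_add]
      rw [hmk0 p, hεk k, map_zero, zero_add, heH_left p, heH_right k, hmk0 (sA p), hεk (gW k), zero_add]
      rw [hgW]
      simp
    have comp4 : ∀ v : V, eVH (H.mkQ v) = H.mkQ (e v) := by
      intro v
      have hmk0 : ∀ x : H, H.mkQ (x : V) = 0 :=
        fun x => (Submodule.Quotient.mk_eq_zero H).mpr x.2
      set p := (PV.symm v).1 with hp
      set k := (PV.symm v).2 with hk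
      have hdec : v = (p : V) + (k : V) := by
        conv_lhs => rw [← PV.apply_symm_apply v]
        rw [hPV, coe_prodEquivOfIsCompl']
      rw [hdec]
      simp only [map_add]
      rw [hmk0 p, he_H p, he_L k, hmk0 (eH p), map_zero, zero_add, zero_add]
      rw [heVH, hsB]
      have : ((sB k : Lc) : V) = b • (k : V) := by rw [hsB]; simp
      rw [hsB] at this
      rw [this]
      simp
    have key := hinv e eX eH g eVH comp1 comp2 comp3 comp4 z hzJ
    have hXsymm : ∀ x : X, eX.symm x = a • x := by
      intro x
      rw [LinearEquiv.symm_apply_eq, heX]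
      simp [smul_smul]
      rw [mul_inv_cancel₀ ha, one_smul]
    have hfst : g.toLinearMap ∘ₗ z.1 ∘ₗ eX.symm.toLinearMap = a • (g.toLinearMap ∘ₗ z.1) := by
      ext x
      simp [hXsymm x]
    have hsnd : eVH.toLinearMap ∘ₗ z.2 ∘ₗ g.symm.toLinearMap = b • (z.2 ∘ₗ g.symm.toLinearMap) := by
      ext x
      rw [heVH]
      simp
    rwa [hfst, hsnd] at key

  -- the limit lemma: J is closed under linear degenerations
  have hlim : ∀ p q : (X →ₗ[ℂ] (H ⧸ (X.comap H.subtype))) × ((H ⧸ (X.comap H.subtype)) →ₗ[ℂ] (V ⧸ H)),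
      (∀ t : ℂ, t ≠ 0 → p + t • q ∈ J) → p ∈ J := by
    intro p q hpq
    have Φ := (Module.finBasis ℂ ((X →ₗ[ℂ] (H ⧸ (X.comap H.subtype))) ×
      ((H ⧸ (X.comap H.subtype)) →ₗ[ℂ] (V ⧸ H)))).equivFun
    have hcl := hclosed _ Φ
    have htend : Filter.Tendsto (fun t : ℂ => Φ p + t • Φ q) (nhdsWithin 0 {0}ᶜ)
        (nhds (Φ p)) := by
      have hc : Continuous fun t : ℂ => Φ p + t • Φ q :=
        continuous_const.add (continuous_id.smul continuous_const)
      have h0 := hc.tendsto 0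
      simp only [zero_smul, add_zero] at h0
      exact h0.mono_left nhdsWithin_le_nhds
    have hmem : ∀ᶠ t in nhdsWithin (0:ℂ) {0}ᶜ, Φ p + t • Φ q ∈ Φ '' J := by
      filter_upwards [eventually_mem_nhdsWithin] with t ht
      exact ⟨p + t • q, hpq t ht, by simp⟩
    obtain ⟨y, hyJ, hy⟩ := hcl.mem_of_tendsto htend hmem
    rwa [← Φ.injective hy]
  -- dimension facts and evaluation at a generator of X
  have hL1 : finrank ℂ (V ⧸ H) = 1 := by
    have := Submodule.finrank_quotient_add_finrank H
    omega
  obtain ⟨x₀, hx₀ne, hx₀span⟩ := finrank_eq_one_iff'.mp hX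
  have hext : ∀ f f' : X →ₗ[ℂ] (H ⧸ (X.comap H.subtype)), f x₀ = f' x₀ → f = f' := by
    intro f f' hf
    ext v
    obtain ⟨c, hc⟩ := hx₀span v
    rw [← hc, map_smul, map_smul, hf]
  have hval : ∀ f : X →ₗ[ℂ] (H ⧸ (X.comap H.subtype)), f ≠ 0 → f x₀ ≠ 0 := by
    intro f hf hfx
    exact hf (hext f 0 (by simp [hfx]))
  have hex2 : ∀ ψ : (H ⧸ (X.comap H.subtype)) →ₗ[ℂ] (V ⧸ H), ψ ≠ 0 → ∃ u, ψ u ≠ 0 := by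
    intro ψ hψ
    by_contra hcon
    push_neg at hcon
    exact hψ (LinearMap.ext fun u => hcon u)
  obtain ⟨z₀, hz₀J, hz₀1, hz₀2⟩ := hnot
  have hw₀ : z₀.1 x₀ ≠ 0 := hval _ hz₀1
  intro z hz
  by_cases h1 : z.1 = 0
  · by_cases h2 : z.2 = 0
    · -- z = 0
      have h00 := hcone 0 z₀ hz₀J
      simp only [zero_smul] at h00
      have hz0 : z = ((0 : X →ₗ[ℂ] (H ⧸ (X.comap H.subtype))), (0 : (H ⧸ (X.comap H.subtype)) →ₗ[ℂ] (V ⧸ H))) := by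
        rw [show z = (z.1, z.2) from rfl, h1, h2]
      rw [hz0]
      exact h00
    · -- z.1 = 0, z.2 ≠ 0
      obtain ⟨u, hu⟩ := hex2 z₀.2 hz₀2
      obtain ⟨v, hv⟩ := hex2 z.2 h2
      obtain ⟨cc, hcc⟩ := ratio_one_dim hL1 (z₀.2 u) (z.2 v) hv
      have huu : z.2 (cc • v) = z₀.2 u := by rw [map_smul, ← hcc]
      obtain ⟨g, -, -, hgφ⟩ := pair_trans hL1 z₀.2 z.2 u (cc • v) 0 0 hu huu
        (map_zero _) (map_zero _) (Or.inl ⟨rfl, rfl⟩)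
      have horb1 := horb 1 1 one_ne_zero one_ne_zero g z₀ hz₀J
      simp only [one_smul] at horb1
      have hsnd : z₀.2 ∘ₗ g.symm.toLinearMap = z.2 := by
        rw [← hgφ]
        refine LinearMap.ext fun x => ?_
        simp
      rw [hsnd] at horb1
      have hmem := hlim ((0 : X →ₗ[ℂ] (H ⧸ (X.comap H.subtype))), z.2) (g.toLinearMap ∘ₗ z₀.1, 0) ?_
      · rw [show z = (z.1, z.2) from rfl, h1]
        exact hmem
      · intro t ht
        have h3 := horb t 1 ht one_ne_zero (LinearEquiv.refl ℂ _)
          (g.toLinearMap ∘ₗ z₀.1, z.2) horb1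
        simp only [one_smul] at h3
        have heq : ((0 : X →ₗ[ℂ] (H ⧸ (X.comap H.subtype))), z.2) + t • (g.toLinearMap ∘ₗ z₀.1, (0 : (H ⧸ (X.comap H.subtype)) →ₗ[ℂ] (V ⧸ H)))
            = (t • (g.toLinearMap ∘ₗ z₀.1), z.2) := by
          simp [Prod.ext_iff]
        rw [heq]
        simpa using h3
  · by_cases h2 : z.2 = 0
    · -- z.1 ≠ 0, z.2 = 0
      have hw : z.1 x₀ ≠ 0 := hval _ h1
      obtain ⟨g, hg⟩ := equiv_sends (rfl : finrank ℂ (H ⧸ (X.comap H.subtype)) = finrank ℂ (H ⧸ (X.comap H.subtype)))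
        (z₀.1 x₀) (z.1 x₀) (Or.inr ⟨hw₀, hw⟩)
      have horb1 := horb 1 1 one_ne_zero one_ne_zero g z₀ hz₀J
      simp only [one_smul] at horb1
      have hfst : g.toLinearMap ∘ₗ z₀.1 = z.1 := hext _ _ (by simpa using hg)
      rw [hfst] at horb1
      have hmem := hlim (z.1, (0 : (H ⧸ (X.comap H.subtype)) →ₗ[ℂ] (V ⧸ H))) (0, z₀.2 ∘ₗ g.symm.toLinearMap) ?_
      · rw [show z = (z.1, z.2) from rfl, h2]
        exact hmem
      · intro t ht
        have h3 := horb 1 t one_ne_zero ht (LinearEquiv.refl ℂ _)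
          (z.1, z₀.2 ∘ₗ g.symm.toLinearMap) horb1
        simp only [one_smul] at h3
        have heq : (z.1, (0 : (H ⧸ (X.comap H.subtype)) →ₗ[ℂ] (V ⧸ H))) + t • ((0 : X →ₗ[ℂ] (H ⧸ (X.comap H.subtype))), z₀.2 ∘ₗ g.symm.toLinearMap)
            = (z.1, t • (z₀.2 ∘ₗ g.symm.toLinearMap)) := by
          simp [Prod.ext_iff]
        rw [heq]
        simpa using h3
    · -- both components nonzero
      have hw : z.1 x₀ ≠ 0 := hval _ h1
      have hzw : z.2 (z.1 x₀) = 0 := by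
        have := LinearMap.ext_iff.mp hz x₀
        simpa using this
      by_cases h0 : z₀.2 (z₀.1 x₀) = 0
      · -- direct transitivity on zero-pairing pairs
        obtain ⟨u, hu⟩ := hex2 z₀.2 hz₀2
        obtain ⟨v, hv⟩ := hex2 z.2 h2
        obtain ⟨cc, hcc⟩ := ratio_one_dim hL1 (z₀.2 u) (z.2 v) hv
        have huu : z.2 (cc • v) = z₀.2 u := by rw [map_smul, ← hcc]
        obtain ⟨g, -, hgw, hgφ⟩ := pair_trans hL1 z₀.2 z.2 u (cc • v) (z₀.1 x₀) (z.1 x₀)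
          hu huu h0 hzw (Or.inr ⟨hw₀, hw⟩)
        have horb1 := horb 1 1 one_ne_zero one_ne_zero g z₀ hz₀J
        simp only [one_smul] at horb1
        have hfst : g.toLinearMap ∘ₗ z₀.1 = z.1 := hext _ _ (by simpa using hgw)
        have hsnd : z₀.2 ∘ₗ g.symm.toLinearMap = z.2 := by
          rw [← hgφ]
          refine LinearMap.ext fun x => ?_
          simp
        rw [hfst, hsnd] at horb1
        rw [show z = (z.1, z.2) from rfl]
        exact horb1
      · -- nonzero pairing on z₀ : degenerate
        obtain ⟨g₁, hg₁⟩ := equiv_sends (rfl : finrank ℂ (H ⧸ (X.comap H.subtype)) = finrank ℂ (H ⧸ (X.comap H.subtype)))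
          (z.1 x₀) (z₀.1 x₀) (Or.inr ⟨hw, hw₀⟩)
        set ψ : (H ⧸ (X.comap H.subtype)) →ₗ[ℂ] (V ⧸ H) := z₀.2 ∘ₗ g₁.toLinearMap with hψ
        have hψw : ψ (z.1 x₀) = z₀.2 (z₀.1 x₀) := by rw [hψ]; simp [hg₁]
        apply hlim z ((0 : X →ₗ[ℂ] (H ⧸ (X.comap H.subtype))), ψ)
        intro t ht
        have hpair : (z.2 + t • ψ) (z.1 x₀) = (t • z₀.2) (z₀.1 x₀) := by
          simp [LinearMap.add_apply, hzw, hψw]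
        have htu : (t • z₀.2) (z₀.1 x₀) ≠ 0 := by
          intro hcontra
          rw [LinearMap.smul_apply, smul_eq_zero] at hcontra
          rcases hcontra with h | h
          · exact ht h
          · exact h0 h
        obtain ⟨g, hgu, -, hgφ⟩ := pair_trans hL1 (t • z₀.2) (z.2 + t • ψ)
          (z₀.1 x₀) (z.1 x₀) 0 0 htu hpair (map_zero _) (map_zero _) (Or.inl ⟨rfl, rfl⟩)
        have horb1 := horb 1 t one_ne_zero ht g z₀ hz₀J
        simp only [one_smul] at horb1
        have hfst : g.toLinearMap ∘ₗ z₀.1 = z.1 := hext _ _ (by simpa using hgu)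
        have hsnd : t • (z₀.2 ∘ₗ g.symm.toLinearMap) = z.2 + t • ψ := by
          refine LinearMap.ext fun x => ?_
          have h5 := LinearMap.ext_iff.mp hgφ (g.symm x)
          simp only [LinearMap.comp_apply, LinearEquiv.coe_coe, LinearEquiv.apply_symm_apply,
            LinearMap.smul_apply] at h5
          simp only [LinearMap.smul_apply, LinearMap.comp_apply, LinearEquiv.coe_coe]
          rw [← h5]
        rw [hfst, hsnd] at horb1
        have heq : z + t • ((0 : X →ₗ[ℂ] (H ⧸ (X.comap H.subtype))), ψ) = (z.1, z.2 + t • ψ) := by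
          simp [Prod.ext_iff]
        rw [heq]
        exact horb1
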